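/- In the setup described, let t, d be positive integers with 2d > 5t. Assume that every nonzero w ∈ F₂^m satisfies ‖L·w‖₀ ≥ d, and that 2·(‖B·x − y‖₀ + ‖x‖₀) > 5t for every x ∈ F₂^q. Then every nonzero z ∈ F₂^{m+1} satisfies 2·‖A·z‖₀ > 5t. -/

import Mathlib

lemma hn_elim {α β : Type*} [Fintype α] [Fintype β] [DecidableEq α] [DecidableEq β]
    (u : α → ZMod 2) (v : β → ZMod 2) :
    hammingNorm (Sum.elim u v) = hammingNorm u + hammingNorm v := by
  classical
  unfold hammingNorm
  rw [← Finset.card_disjSum]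
  congr 1
  ext i
  cases i <;> simp [Finset.mem_disjSum]

/-- Concatenation of a prefix `x ∈ F^q` with a suffix `z ∈ F^{h-q}`, as a vector in `F^h`. -/
def concatVec {F : Type*} (q h : ℕ) (hqh : q ≤ h) (x : Fin q → F) (z : Fin (h - q) → F) :
    Fin h → F :=
  fun i => if hi : (i : ℕ) < q then x ⟨i, hi⟩
    else z ⟨(i : ℕ) - q, by have := i.isLt; omega⟩

/-- The block matrix `A = [[B, 0_{n×(m−q)}, y], [L, s']] ∈ F₂^{(n+h)×(m+1)}`. -/
def Amat (n q m h : ℕ)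
    (B : Matrix (Fin n) (Fin q) (ZMod 2)) (y : Fin n → ZMod 2)
    (L : Matrix (Fin h) (Fin m) (ZMod 2)) (s' : Fin h → ZMod 2) :
    Matrix (Fin n ⊕ Fin h) (Fin (m + 1)) (ZMod 2) :=
  Matrix.of fun i j =>
    match i with
    | Sum.inl i => if hj : (j : ℕ) < q then B i ⟨j, hj⟩
        else if (j : ℕ) < m then 0 else y i
    | Sum.inr i => if hj : (j : ℕ) < m then L i ⟨j, hj⟩ else s' i

theorem stmt11 (n q m h : ℕ) (hqm : q ≤ m) (hmh : m ≤ h)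
    (B : Matrix (Fin n) (Fin q) (ZMod 2)) (y : Fin n → ZMod 2)
    (L : Matrix (Fin h) (Fin m) (ZMod 2)) (s : Fin (h - q) → ZMod 2)
    (hsys : ∀ (w : Fin m → ZMod 2) (i : Fin m), L.mulVec w (Fin.castLE hmh i) = w i)
    (t d : ℕ) (ht : 0 < t) (hd : 0 < d) (htd : 5 * t < 2 * d)
    (hL : ∀ w : Fin m → ZMod 2, w ≠ 0 → d ≤ hammingNorm (L.mulVec w))
    (hB : ∀ x : Fin q → ZMod 2,
      5 * t < 2 * (hammingNorm (B.mulVec x - y) + hammingNorm x)) :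
    ∀ z : Fin (m + 1) → ZMod 2, z ≠ 0 →
      5 * t < 2 * hammingNorm
        ((Amat n q m h B y L (concatVec q h (hqm.trans hmh) 0 s)).mulVec z) := by
  intro z hz
  set s' := concatVec q h (hqm.trans hmh) 0 s with hs'
  set b := z (Fin.last m) with hbdef
  set w : Fin m → ZMod 2 := fun j => z (Fin.castSucc j) with hw
  set x : Fin q → ZMod 2 := fun j => w (Fin.castLE hqm j) with hx
  have key : (Amat n q m h B y L s').mulVec z
      = Sum.elim (fun i => B.mulVec x i + y i * b) (fun i => L.mulVec w i + s' i * b) := by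
    funext i
    cases i with
    | inl i =>
      simp only [Matrix.mulVec, dotProduct, Sum.elim_inl]
      rw [Fin.sum_univ_castSucc]
      congr 1
      · have e1 : ∀ j : Fin m,
            Amat n q m h B y L s' (Sum.inl i) (Fin.castSucc j) * z (Fin.castSucc j)
              = (fun k : ℕ => if hk : k < q then B i ⟨k, hk⟩ * x ⟨k, hk⟩ else 0)
                  ((Fin.castSucc j : Fin (m+1)) : ℕ) := by
          intro j
          by_cases hj : (j : ℕ) < q
          · simp [Amat, hj, hx, hw]
            exact Or.inl rfl
          · simp [Amat, hj, j.isLt]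
        calc ∑ j : Fin m, Amat n q m h B y L s' (Sum.inl i) (Fin.castSucc j) * z (Fin.castSucc j)
            = ∑ j : Fin m, (fun k : ℕ => if hk : k < q then B i ⟨k, hk⟩ * x ⟨k, hk⟩ else 0) (j : ℕ) := by
              exact Finset.sum_congr rfl fun j _ => e1 j
          _ = ∑ j ∈ Finset.range m, (fun k : ℕ => if hk : k < q then B i ⟨k, hk⟩ * x ⟨k, hk⟩ else 0) j :=
              Fin.sum_univ_eq_sum_range (fun k : ℕ => if hk : k < q then B i ⟨k, hk⟩ * x ⟨k, hk⟩ else 0) m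
          _ = ∑ j ∈ Finset.range q, (fun k : ℕ => if hk : k < q then B i ⟨k, hk⟩ * x ⟨k, hk⟩ else 0) j := by
              refine (Finset.sum_subset (Finset.range_subset_range.2 hqm) ?_).symm
              intro j _ hj
              simp only [Finset.mem_range] at hj
              simp [hj]
          _ = ∑ j : Fin q, (fun k : ℕ => if hk : k < q then B i ⟨k, hk⟩ * x ⟨k, hk⟩ else 0) (j : ℕ) :=
              (Fin.sum_univ_eq_sum_range (fun k : ℕ => if hk : k < q then B i ⟨k, hk⟩ * x ⟨k, hk⟩ else 0) q).symm
          _ = ∑ j : Fin q, B i j * x j := by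
              refine Finset.sum_congr rfl fun j _ => ?_
              simp [j.isLt]
          _ = B.mulVec x i := rfl
      · have hmq : ¬ (m < q) := by omega
        have hmm : ¬ (m < m) := by omega
        simp [Amat, hmq, hmm, Fin.last, hbdef]
    | inr i =>
      simp only [Matrix.mulVec, dotProduct, Sum.elim_inr]
      rw [Fin.sum_univ_castSucc]
      congr 1
      · refine Finset.sum_congr rfl fun j _ => ?_
        simp [Amat, j.isLt, hw]
      · simp [Amat, hbdef]
  rw [key, hn_elim]
  have hb01 : ∀ c : ZMod 2, c = 0 ∨ c = 1 := by decide
  rcases hb01 b with hb | hb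
  · -- b = 0
    have hw0 : w ≠ 0 := by
      intro hw0
      apply hz
      funext i
      refine Fin.lastCases ?_ ?_ i
      · exact hb
      · intro j
        have := congrFun hw0 j
        simpa [hw] using this
    have h1 := hL w hw0
    have h2 : (fun i => L.mulVec w i + s' i * b) = L.mulVec w := by
      funext i; simp [hb]
    rw [h2]
    have := Nat.le_add_left (hammingNorm (L.mulVec w))
      (hammingNorm fun i => B.mulVec x i + y i * b)
    omega
  · -- b = 1
    have h1 : (fun i => B.mulVec x i + y i * b) = B.mulVec x - y := by
      funext i
      simp [hb, sub_eq_add_neg, CharTwo.neg_eq]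
    have h2 : hammingNorm x ≤ hammingNorm (fun i => L.mulVec w i + s' i * b) := by
      unfold hammingNorm
      apply Finset.card_le_card_of_injOn (fun j => Fin.castLE hmh (Fin.castLE hqm j))
      · intro j hj
        simp only [Finset.mem_coe, Finset.mem_filter, Finset.mem_univ, true_and] at hj ⊢
        have hsv : s' (Fin.castLE hmh (Fin.castLE hqm j)) = 0 := by
          simp [hs', concatVec, j.isLt]
        rw [hsys w (Fin.castLE hqm j), hsv]
        simpa [hx] using hj
      · intro a _ c _ hac
        simpa [Fin.ext_iff] using congrArg Fin.val hac
    rw [h1]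
    have := hB x
    omega
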